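/- If g and f are invertible symmetric real D×D matrices of Lorentzian signature and g⁻¹f has no negative real eigenvalues, then there exists a real matrix γ with γ² = g⁻¹f and fγ symmetric. -/

import Mathlib

open Matrix Polynomial

-- Hensel lifting step
lemma sqrt_mod_pow (q : Polynomial ℝ) (hq : Irreducible q) (h0 : ¬ (q ∣ X))
    (base : ∃ p : Polynomial ℝ, q ∣ p^2 - X) :
    ∀ m : ℕ, ∃ p : Polynomial ℝ, q^(m+1) ∣ p^2 - X := by
  intro m
  induction m with
  | zero => simpa using base
  | succ m ih =>
    obtain ⟨p, hp⟩ := ih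
    obtain ⟨s, hs⟩ := hp
    have hqp : ¬ q ∣ p := by
      intro hdvd
      apply h0
      have : X = p*p - q^(m+1)*s := by linear_combination -hs
      rw [this]
      exact dvd_sub (Dvd.dvd.mul_right hdvd p) (Dvd.dvd.mul_right (dvd_pow_self q (Nat.succ_ne_zero m)) s)
    have hq2p : ¬ q ∣ (2*p : Polynomial ℝ) := by
      intro hdvd
      apply hqp
      have h2 : IsUnit (2 : Polynomial ℝ) := by
        have := isUnit_C.mpr (isUnit_iff_ne_zero.mpr (two_ne_zero (α := ℝ)))
        rwa [map_ofNat] at this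
      exact (h2.dvd_mul_left).mp hdvd
    obtain ⟨a, b, hab⟩ := (hq.coprime_iff_not_dvd.mpr hq2p)
    refine ⟨p - b*s*q^(m+1), s*a + (b*s)^2*q^m, ?_⟩
    linear_combination hs - q^(m+1)*s*hab

lemma sqrt_mod_irreducible (q : Polynomial ℝ) (hq : Irreducible q)
    (hroots : ∀ r : ℝ, r ≤ 0 → q.eval r ≠ 0) :
    ∃ p : Polynomial ℝ, q ∣ p^2 - X := by
  by_cases hre : ∃ a : ℝ, q.eval a = 0
  · -- real root case
    obtain ⟨a, ha⟩ := hre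
    have ha' : 0 < a := by
      by_contra h
      exact hroots a (le_of_not_gt h) ha
    obtain ⟨t, ht⟩ := dvd_iff_isRoot.mpr ha
    have htu : IsUnit t := by
      rcases hq.isUnit_or_isUnit ht with h | h
      · exact absurd h (Polynomial.not_isUnit_X_sub_C a)
      · exact h
    obtain ⟨u, rfl⟩ := htu
    have hqd : q ∣ X - C a := ⟨↑u⁻¹, by rw [ht, mul_assoc]; simp⟩
    refine ⟨C (Real.sqrt a), ?_⟩
    have : (C (Real.sqrt a))^2 - X = -(X - C a) := by
      rw [← C_pow, Real.sq_sqrt ha'.le]; ring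
    rw [this]
    exact hqd.neg_right
  · -- no real root: use complex embedding of the quotient field
    push_neg at hre
    have hq0 : q ≠ 0 := hq.ne_zero
    have : Fact (Irreducible q) := ⟨hq⟩
    letI K := AdjoinRoot q
    have : FiniteDimensional ℝ K := PowerBasis.finite (AdjoinRoot.powerBasis hq0)
    let σ : K →ₐ[ℝ] ℂ := IsAlgClosed.lift
    set z : ℂ := σ (AdjoinRoot.root q) with hz
    have hzroot : aeval z q = 0 := by
      rw [hz, Polynomial.aeval_algHom_apply, AdjoinRoot.aeval_eq, AdjoinRoot.mk_self, map_zero]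
    have him : z.im ≠ 0 := by
      intro h0
      have hzre : z = ((z.re : ℝ) : ℂ) := by
        apply Complex.ext <;> simp [h0]
      apply hre z.re
      have h := hzroot
      rw [hzre] at h
      rw [show ((z.re:ℝ):ℂ) = algebraMap ℝ ℂ z.re from rfl,
        Polynomial.aeval_algebraMap_apply] at h
      have : ((q.eval z.re : ℝ) : ℂ) = 0 := by simpa using h
      exact_mod_cast this
    obtain ⟨w, hw⟩ := IsAlgClosed.exists_pow_nat_eq z (n := 2) (by norm_num)
    have hIw : w ∈ σ.range := by
      have hz' : z ∈ σ.range := ⟨AdjoinRoot.root q, rfl⟩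
      have hI : Complex.I ∈ σ.range := by
        have h1 : ((z.im⁻¹ : ℝ) : ℂ) ∈ σ.range := ⟨algebraMap ℝ K z.im⁻¹, by simp [AlgHom.commutes]⟩
        have h2 : ((z.re : ℝ) : ℂ) ∈ σ.range := ⟨algebraMap ℝ K z.re, by simp [AlgHom.commutes]⟩
        have : Complex.I = (z - ((z.re:ℝ):ℂ)) * ((z.im⁻¹:ℝ):ℂ) := by
          rw [Complex.ofReal_inv]
          field_simp [him]
          apply Complex.ext <;> simp [mul_comm]
        rw [this]
        exact mul_mem (sub_mem hz' h2) h1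
      have : w = ((w.re:ℝ):ℂ) + ((w.im:ℝ):ℂ) * Complex.I := by
        simp [Complex.re_add_im]
      rw [this]
      exact add_mem ⟨algebraMap ℝ K w.re, by simp [AlgHom.commutes]⟩
        (mul_mem ⟨algebraMap ℝ K w.im, by simp [AlgHom.commutes]⟩ hI)
    obtain ⟨k, hk⟩ := hIw
    obtain ⟨p, hp⟩ := AdjoinRoot.mk_surjective k
    refine ⟨p, ?_⟩
    rw [← AdjoinRoot.mk_eq_zero]
    have hinj : Function.Injective σ := σ.toRingHom.injective
    apply hinj
    have hk' : σ k = w := hk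
    rw [map_zero, map_sub, map_pow, AdjoinRoot.mk_X, hp]
    rw [map_sub, map_pow, hk', hw, hz, sub_self]

lemma sqrt_mod_main : ∀ (n : ℕ) (χ : Polynomial ℝ), χ.natDegree ≤ n → χ ≠ 0 →
    (∀ r : ℝ, r ≤ 0 → χ.eval r ≠ 0) → ∃ p : Polynomial ℝ, χ ∣ p^2 - X := by
  intro n
  induction n with
  | zero =>
    intro χ hdeg hne _
    refine ⟨0, ?_⟩
    have : IsUnit χ := by
      rw [Polynomial.eq_C_of_natDegree_eq_zero (Nat.le_zero.mp hdeg)] at hne ⊢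
      exact isUnit_C.mpr (isUnit_iff_ne_zero.mpr (fun h => hne (by rw [h, map_zero])))
    exact this.dvd
  | succ n ih =>
    intro χ hdeg hne hroots
    by_cases hu : IsUnit χ
    · exact ⟨0, hu.dvd⟩
    obtain ⟨q, hqirr, hqdvd⟩ := WfDvdMonoid.exists_irreducible_factor hu hne
    have hqroots : ∀ r : ℝ, r ≤ 0 → q.eval r ≠ 0 := by
      obtain ⟨u, hu'⟩ := hqdvd
      intro r hr h
      exact hroots r hr (by rw [hu', eval_mul, h, zero_mul])
    have h0 : ¬ q ∣ X := by
      intro hd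
      obtain ⟨t, ht⟩ := hd
      have htu : IsUnit t := by
        rcases Polynomial.irreducible_X.isUnit_or_isUnit ht with h | h
        · exact absurd h hqirr.not_isUnit
        · exact h
      obtain ⟨v, rfl⟩ := htu
      have hXq : X ∣ q := ⟨↑v⁻¹, by rw [ht, mul_assoc]; simp⟩
      have : χ.coeff 0 = 0 := Polynomial.X_dvd_iff.mp (hXq.trans hqdvd)
      exact hroots 0 le_rfl (by rwa [← Polynomial.coeff_zero_eq_eval_zero])
    have base := sqrt_mod_irreducible q hqirr hqroots
    have hfin : FiniteMultiplicity q χ :=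
      FiniteMultiplicity.of_not_isUnit hqirr.not_isUnit hne
    obtain ⟨s, hχ, hqs⟩ := hfin.exists_eq_pow_mul_and_not_dvd
    obtain ⟨m', hm'⟩ : ∃ m', multiplicity q χ = m' + 1 := by
      rcases Nat.eq_zero_or_pos (multiplicity q χ) with h | h
      · rw [h, pow_zero, one_mul] at hχ; exact absurd (hχ ▸ hqdvd) hqs
      · exact ⟨multiplicity q χ - 1, by omega⟩
    rw [hm'] at hχ
    obtain ⟨p₁, hp₁⟩ := sqrt_mod_pow q hqirr h0 base m'
    have hs0 : s ≠ 0 := fun h => hne (by rw [hχ, h, mul_zero])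
    have hsroots : ∀ r : ℝ, r ≤ 0 → s.eval r ≠ 0 := by
      intro r hr h
      exact hroots r hr (by rw [hχ, eval_mul, h, mul_zero])
    have hdegs : s.natDegree ≤ n := by
      have h1 : χ.natDegree = (m'+1) * q.natDegree + s.natDegree := by
        rw [hχ, natDegree_mul (pow_ne_zero _ hqirr.ne_zero) hs0, natDegree_pow]
      have h2 : 0 < q.natDegree := hqirr.natDegree_pos
      have h3 : q.natDegree ≤ (m'+1) * q.natDegree := Nat.le_mul_of_pos_left _ (by omega)
      omega
    obtain ⟨p₂, hp₂⟩ := ih s hdegs hs0 hsroots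
    have hcop : IsCoprime (q^(m'+1)) s :=
      ((hqirr.coprime_iff_not_dvd).mpr hqs).pow_left
    obtain ⟨a, b, hab⟩ := id hcop
    set p := p₁*(b*s) + p₂*(a*q^(m'+1)) with hp
    have d1 : q^(m'+1) ∣ p - p₁ := ⟨a*(p₂ - p₁), by rw [hp]; linear_combination p₁*hab⟩
    have d2 : s ∣ p - p₂ := ⟨b*(p₁ - p₂), by rw [hp]; linear_combination p₂*hab⟩
    have h1 : q^(m'+1) ∣ p^2 - X := by
      have e : p^2 - X = (p - p₁)*(p+p₁) + (p₁^2 - X) := by ring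
      rw [e]; exact dvd_add (d1.mul_right _) hp₁
    have h2 : s ∣ p^2 - X := by
      have e : p^2 - X = (p - p₂)*(p+p₂) + (p₂^2 - X) := by ring
      rw [e]; exact dvd_add (d2.mul_right _) hp₂
    exact ⟨p, hχ ▸ (IsCoprime.mul_dvd hcop h1 h2)⟩

theorem stmt_12 (D : ℕ) (η g f : Matrix (Fin D) (Fin D) ℝ)
    (hη : η = Matrix.diagonal (fun i : Fin D => if (i : ℕ) = 0 then (-1 : ℝ) else 1))
    (hg : gᵀ = g) (hginv : IsUnit g.det)
    (hf : fᵀ = f) (hfinv : IsUnit f.det)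
    (hgsig : ∃ U : Matrix (Fin D) (Fin D) ℝ, IsUnit U.det ∧ g = Uᵀ * η * U)
    (hfsig : ∃ V : Matrix (Fin D) (Fin D) ℝ, IsUnit V.det ∧ f = Vᵀ * η * V)
    (hneg : ∀ r : ℝ, r < 0 →
      ¬ (((g⁻¹ * f).map (algebraMap ℝ ℂ)).charpoly.IsRoot (r : ℂ))) :
    ∃ γ : Matrix (Fin D) (Fin D) ℝ, γ * γ = g⁻¹ * f ∧ (f * γ)ᵀ = f * γ := by
  have hg1 : g * g⁻¹ = 1 := Matrix.mul_nonsing_inv g hginv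
  set A := g⁻¹ * f with hA
  have hAT : Aᵀ = f * g⁻¹ := by
    rw [hA, Matrix.transpose_mul, Matrix.transpose_nonsing_inv, hg, hf]
  have hATf : Aᵀ * f = f * A := by rw [hAT, Matrix.mul_assoc, hA]
  have hkey : ∀ k : ℕ, (f * A^k)ᵀ = f * A^k := by
    intro k
    induction k with
    | zero => simpa using hf
    | succ k ihk =>
      have e : f * A^(k+1) = f * A^k * A := by rw [pow_succ, Matrix.mul_assoc]
      rw [e, Matrix.transpose_mul, ihk]
      calc Aᵀ * (f * A^k) = (Aᵀ * f) * A^k := by rw [Matrix.mul_assoc]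
        _ = f * (A * A^k) := by rw [hATf, Matrix.mul_assoc]
        _ = f * (A^k * A) := by rw [← pow_succ', pow_succ]
        _ = f * A^k * A := by rw [Matrix.mul_assoc]
  have hdetA : A.det ≠ 0 := by
    have h1 : A.det = g⁻¹.det * f.det := Matrix.det_mul _ _
    rw [h1, Matrix.det_nonsing_inv, Ring.inverse_eq_inv']
    exact mul_ne_zero (inv_ne_zero hginv.ne_zero) hfinv.ne_zero
  set χ := A.charpoly with hχ
  have hroots : ∀ r : ℝ, r ≤ 0 → χ.eval r ≠ 0 := by
    intro r hr h
    rcases lt_or_eq_of_le hr with hlt | heq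
    · apply hneg r hlt
      show ((A.map (algebraMap ℝ ℂ)).charpoly).eval (r : ℂ) = 0
      rw [Matrix.charpoly_map]
      have : ((r : ℝ) : ℂ) = algebraMap ℝ ℂ r := rfl
      rw [this, Polynomial.eval_map, Polynomial.eval₂_at_apply, h, map_zero]
    · -- r = 0
      subst heq
      rw [← Polynomial.coeff_zero_eq_eval_zero] at h
      have := Matrix.det_eq_sign_charpoly_coeff A
      rw [← hχ, h, mul_zero] at this
      exact hdetA this
  obtain ⟨p, hdvd⟩ := sqrt_mod_main χ.natDegree χ le_rfl (A.charpoly_monic.ne_zero) hroots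
  obtain ⟨t, ht⟩ := hdvd
  set γ := Polynomial.aeval A p with hγ
  have h1 : γ * γ = A := by
    have := congrArg (Polynomial.aeval A) ht
    rw [map_sub, map_pow, Polynomial.aeval_X, _root_.map_mul, hχ,
      Matrix.aeval_self_charpoly, zero_mul] at this
    have h2 : γ^2 = A := by rw [hγ]; exact sub_eq_zero.mp this
    rw [← h2, sq]
  refine ⟨γ, h1, ?_⟩
  have hsym : ∀ (r : Polynomial ℝ), (f * (Polynomial.aeval A r))ᵀ = f * Polynomial.aeval A r := by
    intro r
    induction r using Polynomial.induction_on' with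
    | add u v hu hv => rw [map_add, Matrix.mul_add, Matrix.transpose_add, hu, hv]
    | monomial n c =>
      rw [Polynomial.aeval_monomial, ← Algebra.smul_def, Matrix.mul_smul,
        Matrix.transpose_smul, hkey n]
  exact hsym p
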